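/- In the vertex on-line Ramsey game, builder has a strategy which forces either a red clique K_s or a blue clique K_n using at most C(s+n-2, s-1) vertices, at most (s-2)C(s+n-2,s-1)+1 red edges, and at most (s+n-4)C(s+n-2,s-1)+1 total edges. In particular the vertex on-line Ramsey number satisfies \tilde{r}(s,n) \le (s+n-4)C(s+n-2,s-1)+1. -/

import Mathlib

/-- A builder move in the vertex on-line Ramsey game: reveal a new vertex, or draw the edge
from the earlier vertex `j` to the newest vertex. -/
inductive BMove where
  | reveal : BMove
  | draw : ℕ → BMove

/-- A game state: the number `nv` of revealed vertices (vertices are `0, …, nv-1`), and the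
list of drawn edges together with their colors (`true` = red, `false` = blue); an edge is
recorded as `((j, i), c)` with `j < i`. -/
structure GState where
  nv : ℕ
  edges : List ((ℕ × ℕ) × Bool)

open scoped Classical in
/-- One step of the game: builder (strategy `S`, a function of the current state) either
reveals a new vertex or draws a not-yet-drawn edge from an earlier vertex `j` to the newest
vertex; painter (strategy `P`, a function of the history and the drawn edge) colors the drawn
edge immediately. Illegal moves leave the state unchanged. -/
noncomputable def gstep (S : GState → BMove)
    (P : List ((ℕ × ℕ) × Bool) → ℕ × ℕ → Bool) (st : GState) : GState :=
  match S st with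
  | BMove.reveal => ⟨st.nv + 1, st.edges⟩
  | BMove.draw j =>
      if (j + 1 < st.nv ∧ ∀ c : Bool, ((j, st.nv - 1), c) ∉ st.edges) then
        ⟨st.nv, ((j, st.nv - 1), P st.edges (j, st.nv - 1)) :: st.edges⟩
      else st

/-- The state of the game after `t` steps, starting from the empty state. -/
noncomputable def gplay (S : GState → BMove)
    (P : List ((ℕ × ℕ) × Bool) → ℕ × ℕ → Bool) : ℕ → GState
  | 0 => ⟨0, []⟩
  | t + 1 => gstep S P (gplay S P t)

/-- The drawn edges contain a monochromatic clique of size `k` in color `col`. -/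
def HasMonoClique (st : GState) (col : Bool) (k : ℕ) : Prop :=
  ∃ T : Finset ℕ, T.card = k ∧ ∀ a ∈ T, ∀ b ∈ T, a < b → ((a, b), col) ∈ st.edges

/-- The number of red edges drawn so far. -/
def redCount (st : GState) : ℕ := (st.edges.filter (fun e => e.2 = true)).length

/-- Builder strategy `S` forces, against every painter, a red `K_s` or a blue `K_n` using at
most `v` vertices, at most `r` red edges and at most `m` drawn edges in total. -/
def BuilderWins (S : GState → BMove) (s n v r m : ℕ) : Prop :=
  ∀ P : List ((ℕ × ℕ) × Bool) → ℕ × ℕ → Bool, ∃ t : ℕ,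
    (HasMonoClique (gplay S P t) true s ∨ HasMonoClique (gplay S P t) false n) ∧
    (gplay S P t).nv ≤ v ∧ redCount (gplay S P t) ≤ r ∧ (gplay S P t).edges.length ≤ m

/-- The vertex on-line Ramsey number: the minimum number of drawn edges with which builder
can force a red `K_s` or a blue `K_n` against any painter. -/
noncomputable def rTilde (s n : ℕ) : ℕ :=
  sInf {m : ℕ | ∃ S : GState → BMove, ∃ v r : ℕ, BuilderWins S s n v r m}

namespace VOR

/-! ### Words of vertices -/

/-- edges whose newer endpoint is `x`, newest first -/
def edgesTo (x : ℕ) (E : List ((ℕ × ℕ) × Bool)) : List ((ℕ × ℕ) × Bool) :=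
  E.filter (fun e => e.1.2 == x)

/-- the word of vertex `x`: colors of its edges (as newer endpoint), newest first -/
def wordOf (x : ℕ) (E : List ((ℕ × ℕ) × Bool)) : List Bool :=
  (edgesTo x E).map Prod.snd

@[simp] lemma edgesTo_nil (x : ℕ) : edgesTo x [] = [] := rfl
@[simp] lemma wordOf_nil (x : ℕ) : wordOf x [] = [] := rfl

lemma edgesTo_cons (x a b : ℕ) (c : Bool) (E : List ((ℕ × ℕ) × Bool)) :
    edgesTo x (((a, b), c) :: E) =
      if b = x then ((a, b), c) :: edgesTo x E else edgesTo x E := by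
  simp only [edgesTo, List.filter_cons]
  by_cases h : b = x <;> simp [h]

lemma wordOf_cons (x a b : ℕ) (c : Bool) (E : List ((ℕ × ℕ) × Bool)) :
    wordOf x (((a, b), c) :: E) =
      if b = x then c :: wordOf x E else wordOf x E := by
  simp only [wordOf, edgesTo_cons]
  by_cases h : b = x <;> simp [h]

lemma mem_edgesTo {x : ℕ} {E : List ((ℕ × ℕ) × Bool)} {e : (ℕ × ℕ) × Bool} :
    e ∈ edgesTo x E ↔ e ∈ E ∧ e.1.2 = x := by
  simp [edgesTo, List.mem_filter]

lemma length_wordOf (x : ℕ) (E : List ((ℕ × ℕ) × Bool)) :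
    (wordOf x E).length = (edgesTo x E).length := by simp [wordOf]

lemma edgesTo_eq_nil {x : ℕ} {E : List ((ℕ × ℕ) × Bool)}
    (h : ∀ e ∈ E, e.1.2 ≠ x) : edgesTo x E = [] := by
  simp only [edgesTo, List.filter_eq_nil_iff]
  intro e he
  simpa using h e he

lemma count_true_add_count_false (w : List Bool) :
    w.count true + w.count false = w.length := by
  induction w with
  | nil => simp
  | cons c w ih =>
    rw [List.length_cons, List.count_cons, List.count_cons, ← ih]
    cases c <;> simp <;> omega

/-! ### Counting words -/

/-- Finset of Bool words with at most `a` trues and at most `b` falses. -/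
def WF : ℕ → ℕ → Finset (List Bool)
  | 0, 0 => {[]}
  | 0, b+1 => {([] : List Bool)} ∪ (WF 0 b).image (false :: ·)
  | a+1, 0 => {([] : List Bool)} ∪ (WF a 0).image (true :: ·)
  | a+1, b+1 => ({([] : List Bool)} ∪ (WF a (b+1)).image (true :: ·)) ∪ (WF (a+1) b).image (false :: ·)

lemma mem_WF : ∀ (a b : ℕ) (w : List Bool),
    w ∈ WF a b ↔ w.count true ≤ a ∧ w.count false ≤ b := by
  intro a
  induction a with
  | zero =>
    intro b
    induction b with
    | zero =>
      intro w
      simp only [WF, Finset.mem_singleton]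
      constructor
      · rintro rfl; simp
      · intro ⟨h1, h2⟩
        cases w with
        | nil => rfl
        | cons c w => cases c <;> simp [List.count_cons] at h1 h2
    | succ b ih =>
      intro w
      simp only [WF, Finset.mem_union, Finset.mem_singleton, Finset.mem_image]
      constructor
      · rintro (rfl | ⟨v, hv, rfl⟩)
        · simp
        · rw [ih] at hv
          simp [List.count_cons]; omega
      · intro ⟨h1, h2⟩
        cases w with
        | nil => left; rfl
        | cons c w =>
          cases c
          · right; exact ⟨w, (ih w).2 (by simp [List.count_cons] at h1 h2 ⊢; omega), rfl⟩
          · simp [List.count_cons] at h1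
  | succ a iha =>
    intro b
    induction b with
    | zero =>
      intro w
      simp only [WF, Finset.mem_union, Finset.mem_singleton, Finset.mem_image]
      constructor
      · rintro (rfl | ⟨v, hv, rfl⟩)
        · simp
        · rw [iha 0] at hv
          simp [List.count_cons]; omega
      · intro ⟨h1, h2⟩
        cases w with
        | nil => left; rfl
        | cons c w =>
          cases c
          · simp [List.count_cons] at h2
          · right; exact ⟨w, (iha 0 w).2 (by simp [List.count_cons] at h1 h2 ⊢; omega), rfl⟩
    | succ b ihb =>
      intro w
      simp only [WF, Finset.mem_union, Finset.mem_singleton, Finset.mem_image]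
      constructor
      · rintro ((rfl | ⟨v, hv, rfl⟩) | ⟨v, hv, rfl⟩)
        · simp
        · rw [iha (b+1)] at hv
          simp [List.count_cons]; omega
        · rw [ihb] at hv
          simp [List.count_cons]; omega
      · intro ⟨h1, h2⟩
        cases w with
        | nil => left; left; rfl
        | cons c w =>
          cases c
          · right; exact ⟨w, (ihb w).2 (by simp [List.count_cons] at h1 h2 ⊢; omega), rfl⟩
          · left; right
            exact ⟨w, (iha (b+1) w).2 (by simp [List.count_cons] at h1 h2 ⊢; omega), rfl⟩

lemma card_WF : ∀ (a b : ℕ), (WF a b).card + 1 = Nat.choose (a + b + 2) (a + 1) := by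
  have hinj : ∀ (c : Bool), Function.Injective (c :: · : List Bool → List Bool) := by
    intro c x y h; simpa using h
  intro a
  induction a with
  | zero =>
    intro b
    induction b with
    | zero => simp [WF]
    | succ b ih =>
      rw [WF, Finset.card_union_of_disjoint (by simp [Finset.disjoint_left]),
        Finset.card_image_of_injective _ (hinj false), Finset.card_singleton]
      rw [Nat.choose_one_right] at ih ⊢
      omega
  | succ a iha =>
    intro b
    induction b with
    | zero =>
      rw [WF, Finset.card_union_of_disjoint (by simp [Finset.disjoint_left]),
        Finset.card_image_of_injective _ (hinj true), Finset.card_singleton]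
      have h := iha 0
      have e1 : (a + 0 + 2).choose (a+1) = a + 2 := by
        rw [show a + 0 + 2 = (a+1)+1 by omega, Nat.choose_succ_self_right]
      have e2 : (a + 1 + 0 + 2).choose (a+1+1) = a + 3 := by
        rw [show a + 1 + 0 + 2 = (a+1+1)+1 by omega, Nat.choose_succ_self_right]
      rw [e1] at h
      rw [e2]
      omega
    | succ b ihb =>
      rw [WF, Finset.card_union_of_disjoint, Finset.card_union_of_disjoint (by simp [Finset.disjoint_left]),
        Finset.card_image_of_injective _ (hinj true), Finset.card_image_of_injective _ (hinj false),
        Finset.card_singleton]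
      · have h1 := iha (b+1)
        have h2 := ihb
        have e3 : a + 1 + (b + 1) + 2 = (a + (b + 1) + 2) + 1 := by omega
        rw [e3, Nat.choose_succ_succ (a + (b+1) + 2) (a+1)]
        have e4 : a + 1 + b + 2 = a + (b + 1) + 2 := by omega
        rw [e4] at h2
        simp only [Nat.choose_succ_succ, Nat.succ_eq_add_one] at *
        omega
      · simp only [Finset.disjoint_left, Finset.mem_union, Finset.mem_singleton, Finset.mem_image]
        rintro w (rfl | ⟨v, _, rfl⟩) ⟨u, _, h⟩ <;> simp at h

/-! ### Partition counting of edge lists -/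

lemma length_eq_sum : ∀ (E : List ((ℕ × ℕ) × Bool)) (nv : ℕ),
    (∀ e ∈ E, e.1.2 < nv) →
    E.length = ∑ x ∈ Finset.range nv, (edgesTo x E).length := by
  intro E
  induction E with
  | nil => intro nv _; simp
  | cons e E ih =>
    obtain ⟨⟨a, b⟩, c⟩ := e
    intro nv hE
    have hb : b ∈ Finset.range nv := by
      simpa using hE ((a,b),c) (by simp)
    have hx : ∀ x, (edgesTo x (((a,b),c) :: E)).length
        = (edgesTo x E).length + (if b = x then 1 else 0) := by
      intro x
      rw [edgesTo_cons]
      by_cases h : b = x <;> simp [h]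
    simp only [hx]
    rw [Finset.sum_add_distrib, Finset.sum_ite_eq, if_pos hb,
      ← ih nv (fun e he => hE e (by simp [he]))]
    simp

lemma red_eq_sum : ∀ (E : List ((ℕ × ℕ) × Bool)) (nv : ℕ),
    (∀ e ∈ E, e.1.2 < nv) →
    (E.filter (fun e => e.2 = true)).length = ∑ x ∈ Finset.range nv, (wordOf x E).count true := by
  intro E
  induction E with
  | nil => intro nv _; simp
  | cons e E ih =>
    obtain ⟨⟨a, b⟩, c⟩ := e
    intro nv hE
    have hb : b ∈ Finset.range nv := by
      simpa using hE ((a,b),c) (by simp)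
    have hx : ∀ x, (wordOf x (((a,b),c) :: E)).count true
        = (wordOf x E).count true + (if b = x then (if c = true then 1 else 0) else 0) := by
      intro x
      rw [wordOf_cons]
      by_cases h : b = x
      · rw [if_pos h, List.count_cons]
        cases c <;> simp [h]
      · simp [h]
    simp only [hx]
    rw [Finset.sum_add_distrib, Finset.sum_ite_eq, if_pos hb,
      ← ih nv (fun e he => hE e (by simp [he]))]
    rw [List.filter_cons]
    by_cases h : c = true <;> simp [h]

lemma card_posFilter : ∀ (w : List Bool) (c : Bool),
    ((Finset.range w.length).filter (fun j => w.getD j (!c) = c)).card = w.count c := by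
  intro w
  induction w with
  | nil => simp
  | cons b w ih =>
    intro c
    have hset : (Finset.range (b::w).length).filter (fun j => (b::w).getD j (!c) = c)
        = (if b = c then {0} else ∅) ∪
          (((Finset.range w.length).filter (fun j => w.getD j (!c) = c)).image (· + 1)) := by
      ext j
      cases j with
      | zero =>
        by_cases h : b = c <;> simp [h]
      | succ j =>
        by_cases h : b = c <;> simp [h, Nat.succ_lt_succ_iff]
    rw [hset, Finset.card_union_of_disjoint, Finset.card_image_of_injective _ (add_left_injective 1)]
    · rw [ih, List.count_cons]
      by_cases h : b = c <;> simp [h] <;> omega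
    · by_cases h : b = c <;> simp [h, Finset.disjoint_left]

/-! ### The strategy and its invariant -/

/-- Builder has already won: the newest vertex's word has `s-1` reds or `n-1` blues. -/
def Won (s n : ℕ) (st : GState) : Prop :=
  (wordOf (st.nv - 1) st.edges).count true = s - 1 ∨
  (wordOf (st.nv - 1) st.edges).count false = n - 1

open scoped Classical in
/-- Builder's strategy. -/
noncomputable def stratS (s n : ℕ) : GState → BMove := fun st =>
  if st.nv = 0 then .reveal
  else if (wordOf (st.nv - 1) st.edges).count true = s - 1 ∨
      (wordOf (st.nv - 1) st.edges).count false = n - 1 then .reveal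
  else if h : ∃ x, x < st.nv - 1 ∧ wordOf x st.edges = wordOf (st.nv - 1) st.edges then
    .draw (Nat.find h)
  else .reveal

/-- The invariant maintained by the strategy while it has not yet won. -/
structure Inv (s n : ℕ) (st : GState) : Prop where
  hsnd : ∀ e ∈ st.edges, e.1.2 < st.nv
  hstop : ∀ x, x + 1 < st.nv →
    (wordOf x st.edges).count true ≤ s - 2 ∧ (wordOf x st.edges).count false ≤ n - 2
  hdist : ∀ x y, x + 1 < st.nv → y + 1 < st.nv →
    wordOf x st.edges = wordOf y st.edges → x = y
  hnew : 1 ≤ st.nv →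
    (wordOf (st.nv - 1) st.edges).count true ≤ s - 1 ∧
    (wordOf (st.nv - 1) st.edges).count false ≤ n - 1 ∧
    (wordOf (st.nv - 1) st.edges).length + 3 ≤ s + n
  hpart : ∀ x i e, (edgesTo x st.edges)[i]? = some e →
    e.1.1 + 1 < st.nv ∧ e.1.1 < x ∧
    wordOf e.1.1 st.edges = (wordOf x st.edges).drop (i + 1)

lemma suffix_root {s n : ℕ} {st : GState} (inv : Inv s n st) {x j : ℕ}
    (hj : j < (wordOf x st.edges).length) :
    ∃ a, a + 1 < st.nv ∧ wordOf a st.edges = (wordOf x st.edges).drop (j + 1) := by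
  rw [length_wordOf] at hj
  obtain ⟨h1, _, h3⟩ := inv.hpart x j _ (List.getElem?_eq_getElem hj)
  exact ⟨_, h1, h3⟩

lemma root_edge {s n : ℕ} {st : GState} (inv : Inv s n st) {x j a : ℕ}
    (hj : j < (wordOf x st.edges).length)
    (ha : a + 1 < st.nv) (hwa : wordOf a st.edges = (wordOf x st.edges).drop (j + 1)) :
    a < x ∧ ∀ d, ((a, x), (wordOf x st.edges).getD j d) ∈ st.edges := by
  have hj' : j < (edgesTo x st.edges).length := by rw [← length_wordOf]; exact hj
  have he : (edgesTo x st.edges)[j]? = some (edgesTo x st.edges)[j] :=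
    List.getElem?_eq_getElem hj'
  obtain ⟨h1, h2, h3⟩ := inv.hpart x j _ he
  have hax : a = (edgesTo x st.edges)[j].1.1 :=
    inv.hdist a _ ha h1 (hwa.trans h3.symm)
  have hmem := mem_edgesTo.mp (List.mem_of_getElem? he)
  constructor
  · rw [hax]; exact h2
  · intro d
    have hgetD : (wordOf x st.edges).getD j d = (edgesTo x st.edges)[j].2 := by
      rw [List.getD_eq_getElem?_getD, wordOf, List.getElem?_map]
      rw [show (edgesTo x st.edges)[j]? = some (edgesTo x st.edges)[j] from he]
      rfl
    have heta : (((edgesTo x st.edges)[j].1.1, (edgesTo x st.edges)[j].1.2),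
        (edgesTo x st.edges)[j].2) = (edgesTo x st.edges)[j] := rfl
    have hm := hmem.1
    rw [← heta] at hm
    rw [hmem.2] at hm
    rw [hgetD, hax]
    exact hm

lemma buildClique {s n : ℕ} {st : GState} (inv : Inv s n st) (col : Bool) :
    HasMonoClique st col ((wordOf (st.nv - 1) st.edges).count col + 1) := by
  classical
  set u := st.nv - 1 with hu
  set w := wordOf u st.edges with hw
  set pos := (Finset.range w.length).filter (fun j => w.getD j (!col) = col) with hpos
  have hposmem : ∀ j ∈ pos, j < w.length ∧ w.getD j (!col) = col := by
    intro j hj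
    have := Finset.mem_filter.mp hj
    exact ⟨Finset.mem_range.mp this.1, this.2⟩
  set f : ℕ → ℕ := fun j =>
    if h : ∃ a, a + 1 < st.nv ∧ wordOf a st.edges = w.drop (j + 1) then h.choose else 0 with hf
  have hfspec : ∀ j ∈ pos, (f j) + 1 < st.nv ∧ wordOf (f j) st.edges = w.drop (j + 1) := by
    intro j hj
    obtain ⟨hj1, _⟩ := hposmem j hj
    have hex := suffix_root inv (x := u) (j := j) (by rw [← hw]; exact hj1)
    rw [← hw] at hex
    have : f j = hex.choose := by rw [hf]; exact dif_pos hex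
    rw [this]
    exact hex.choose_spec
  have hroot : ∀ j ∈ pos, f j < u ∧ ((f j, u), col) ∈ st.edges := by
    intro j hj
    obtain ⟨hj1, hj2⟩ := hposmem j hj
    obtain ⟨hf1, hf2⟩ := hfspec j hj
    have hre := root_edge inv (x := u) (j := j) (a := f j)
      (by rw [← hw]; exact hj1) hf1 (by rw [← hw]; exact hf2)
    refine ⟨hre.1, ?_⟩
    have h2 := hre.2 (!col)
    rw [← hw, hj2] at h2
    exact h2
  have hpair : ∀ j ∈ pos, ∀ j' ∈ pos, j < j' →
      f j' < f j ∧ ((f j', f j), col) ∈ st.edges := by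
    intro j hj j' hj' hlt
    obtain ⟨hj1, hj2⟩ := hposmem j hj
    obtain ⟨hj'1, hj'2⟩ := hposmem j' hj'
    obtain ⟨hf1, hf2⟩ := hfspec j hj
    obtain ⟨hf'1, hf'2⟩ := hfspec j' hj'
    have hlen : (wordOf (f j) st.edges).length = w.length - (j+1) := by
      rw [hf2, List.length_drop]
    have hjlt : j' - (j+1) < (wordOf (f j) st.edges).length := by rw [hlen]; omega
    have hdropeq : wordOf (f j') st.edges = (wordOf (f j) st.edges).drop ((j' - (j+1)) + 1) := by
      rw [hf2, hf'2, List.drop_drop]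
      congr 1
      omega
    have hgd : (wordOf (f j) st.edges).getD (j' - (j+1)) (!col) = w.getD j' (!col) := by
      rw [hf2, List.getD_eq_getElem?_getD, List.getD_eq_getElem?_getD, List.getElem?_drop]
      congr 2
      omega
    have hre := root_edge inv (x := f j) hjlt hf'1 hdropeq
    refine ⟨hre.1, ?_⟩
    have h2 := hre.2 (!col)
    rw [hgd, hj'2] at h2
    exact h2
  have hinj : Set.InjOn f pos := by
    intro j hj j' hj' hfe
    obtain ⟨hj1, _⟩ := hposmem j hj
    obtain ⟨hj'1, _⟩ := hposmem j' hj'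
    have h1 := (hfspec j hj).2
    have h2 := (hfspec j' hj').2
    rw [hfe] at h1
    have := congrArg List.length (h1.symm.trans h2)
    rw [List.length_drop, List.length_drop] at this
    omega
  have hnotmem : u ∉ pos.image f := by
    intro hmem
    obtain ⟨j, hj, hfj⟩ := Finset.mem_image.mp hmem
    have := (hroot j hj).1
    omega
  refine ⟨insert u (pos.image f), ?_, ?_⟩
  · rw [Finset.card_insert_of_notMem hnotmem, Finset.card_image_of_injOn hinj, hpos,
      card_posFilter]
  · intro a hax b hbx hab
    rcases Finset.mem_insert.mp hax with rfl | hax'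
    · rcases Finset.mem_insert.mp hbx with rfl | hbx'
      · exact absurd hab (lt_irrefl _)
      · obtain ⟨j, hj, rfl⟩ := Finset.mem_image.mp hbx'
        have := (hroot j hj).1
        omega
    · obtain ⟨j, hj, rfl⟩ := Finset.mem_image.mp hax'
      rcases Finset.mem_insert.mp hbx with rfl | hbx'
      · exact (hroot j hj).2
      · obtain ⟨j', hj', rfl⟩ := Finset.mem_image.mp hbx'
        rcases lt_trichotomy j j' with h | h | h
        · have := (hpair j hj j' hj' h).1
          omega
        · subst h
          exact absurd hab (lt_irrefl _)
        · exact (hpair j' hj' j hj h).2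

/-- progress measure -/
def meas (s n : ℕ) (st : GState) : ℕ :=
  (s + n) * st.nv + (wordOf (st.nv - 1) st.edges).length

lemma main_step {s n : ℕ} (hs : 2 ≤ s) (hn : 2 ≤ n)
    (P : List ((ℕ × ℕ) × Bool) → ℕ × ℕ → Bool) (st : GState)
    (inv : Inv s n st) (hw : ¬ Won s n st) :
    Inv s n (gstep (stratS s n) P st) ∧
    meas s n st + 1 ≤ meas s n (gstep (stratS s n) P st) := by
  classical
  have hWc : ¬((wordOf (st.nv - 1) st.edges).count true = s - 1 ∨
      (wordOf (st.nv - 1) st.edges).count false = n - 1) := hw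
  by_cases h0 : st.nv = 0
  · -- first reveal
    have hS : stratS s n st = BMove.reveal := by
      unfold stratS; rw [if_pos h0]
    have hE : st.edges = [] := by
      cases hE : st.edges with
      | nil => rfl
      | cons e E =>
        have := inv.hsnd e (by rw [hE]; simp)
        omega
    have hg : gstep (stratS s n) P st = ⟨st.nv + 1, st.edges⟩ := by
      unfold gstep; rw [hS]
    rw [hg]
    refine ⟨⟨?_, ?_, ?_, ?_, ?_⟩, ?_⟩ <;> try dsimp only
    · intro e he
      rw [hE] at he
      simp at he
    · intro x hx
      exact absurd hx (by omega)
    · intro x y hx hy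
      rw [h0] at hx
      omega
    · intro _
      rw [hE]
      simp
      omega
    · intro x i e he
      rw [hE] at he
      simp at he
    · simp only [meas, hE, h0]
      simp
      omega
  · by_cases hroot : ∃ x, x < st.nv - 1 ∧ wordOf x st.edges = wordOf (st.nv - 1) st.edges
    · -- draw
      have hS : stratS s n st = BMove.draw (Nat.find hroot) := by
        unfold stratS; rw [if_neg h0, if_neg hWc, dif_pos hroot]
      set x0 := Nat.find hroot with hx0
      obtain ⟨hx0lt, hx0w⟩ := Nat.find_spec hroot
      have hleg1 : x0 + 1 < st.nv := by omega
      have hleg2 : ∀ c : Bool, ((x0, st.nv - 1), c) ∉ st.edges := by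
        intro c hc
        have hcmem : ((x0, st.nv - 1), c) ∈ edgesTo (st.nv - 1) st.edges :=
          mem_edgesTo.mpr ⟨hc, rfl⟩
        obtain ⟨i, hi, hgi⟩ := List.getElem_of_mem hcmem
        have hp := inv.hpart (st.nv - 1) i ((x0, st.nv - 1), c)
          (by rw [List.getElem?_eq_getElem hi, hgi])
        have hlen := congrArg List.length (hx0w.symm.trans hp.2.2)
        rw [List.length_drop] at hlen
        have hil : i < (wordOf (st.nv - 1) st.edges).length := by
          rw [length_wordOf]; exact hi
        omega
      have hg : gstep (stratS s n) P st =
          ⟨st.nv, ((x0, st.nv - 1), P st.edges (x0, st.nv - 1)) :: st.edges⟩ := by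
        unfold gstep; rw [hS]; exact if_pos ⟨hleg1, hleg2⟩
      set c := P st.edges (x0, st.nv - 1) with hc
      rw [hg]
      have hwne : ∀ y, y ≠ st.nv - 1 →
          wordOf y (((x0, st.nv - 1), c) :: st.edges) = wordOf y st.edges := by
        intro y hy
        rw [wordOf_cons, if_neg (fun h => hy h.symm)]
      have hwu : wordOf (st.nv - 1) (((x0, st.nv - 1), c) :: st.edges)
          = c :: wordOf (st.nv - 1) st.edges := by
        rw [wordOf_cons, if_pos rfl]
      obtain ⟨hct, hcf, hcl⟩ := inv.hnew (by omega)
      have hnt : (wordOf (st.nv - 1) st.edges).count true ≠ s - 1 := fun h => hw (Or.inl h)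
      have hnf : (wordOf (st.nv - 1) st.edges).count false ≠ n - 1 := fun h => hw (Or.inr h)
      refine ⟨⟨?_, ?_, ?_, ?_, ?_⟩, ?_⟩ <;> try dsimp only
      · intro e he
        rcases List.mem_cons.mp he with rfl | he'
        · simp; omega
        · exact inv.hsnd e he'
      · intro x hx
        rw [hwne x (by omega)]
        exact inv.hstop x hx
      · intro x y hx hy
        rw [hwne x (by omega), hwne y (by omega)]
        exact inv.hdist x y hx hy
      · intro _
        rw [hwu, List.count_cons, List.count_cons, List.length_cons]
        have hlw := count_true_add_count_false (wordOf (st.nv - 1) st.edges)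
        cases c <;> simp <;> omega
      · intro x i e he
        by_cases hx : x = st.nv - 1
        · subst hx
          rw [edgesTo_cons, if_pos rfl] at he
          cases i with
          | zero =>
            rw [List.getElem?_cons_zero] at he
            obtain rfl := Option.some.inj he
            dsimp only
            refine ⟨by omega, by omega, ?_⟩
            rw [hwne x0 (by omega), hwu, List.drop_succ_cons, List.drop_zero]
            exact hx0w
          | succ i =>
            rw [List.getElem?_cons_succ] at he
            obtain ⟨h1, h2, h3⟩ := inv.hpart (st.nv - 1) i e he
            refine ⟨h1, h2, ?_⟩
            rw [hwne e.1.1 (by omega), hwu, List.drop_succ_cons]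
            exact h3
        · rw [edgesTo_cons, if_neg (fun h => hx h.symm)] at he
          obtain ⟨h1, h2, h3⟩ := inv.hpart x i e he
          refine ⟨h1, h2, ?_⟩
          rw [hwne e.1.1 (by omega), hwne x hx]
          exact h3
      · simp only [meas]
        rw [hwu, List.length_cons]
        omega
    · -- reveal, the newest vertex becomes a root
      have hS : stratS s n st = BMove.reveal := by
        unfold stratS; rw [if_neg h0, if_neg hWc, dif_neg hroot]
      have hg : gstep (stratS s n) P st = ⟨st.nv + 1, st.edges⟩ := by
        unfold gstep; rw [hS]
      rw [hg]
      have hnil : edgesTo st.nv st.edges = [] :=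
        edgesTo_eq_nil (fun e he => by have := inv.hsnd e he; omega)
      have hwnil : wordOf st.nv st.edges = [] := by rw [wordOf, hnil]; rfl
      obtain ⟨hct, hcf, hcl⟩ := inv.hnew (by omega)
      have hnt : (wordOf (st.nv - 1) st.edges).count true ≠ s - 1 := fun h => hw (Or.inl h)
      have hnf : (wordOf (st.nv - 1) st.edges).count false ≠ n - 1 := fun h => hw (Or.inr h)
      refine ⟨⟨?_, ?_, ?_, ?_, ?_⟩, ?_⟩ <;> try dsimp only
      · intro e he
        have := inv.hsnd e he
        omega
      · intro x hx
        rcases Nat.lt_or_ge (x + 1) st.nv with h | h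
        · exact inv.hstop x h
        · have hxe : x = st.nv - 1 := by omega
          subst hxe
          omega
      · intro x y hx hy hxy
        rcases Nat.lt_or_ge (x + 1) st.nv with h1 | h1
        · rcases Nat.lt_or_ge (y + 1) st.nv with h2 | h2
          · exact inv.hdist x y h1 h2 hxy
          · have hye : y = st.nv - 1 := by omega
            subst hye
            exact absurd ⟨x, by omega, hxy⟩ hroot
        · rcases Nat.lt_or_ge (y + 1) st.nv with h2 | h2
          · have hxe : x = st.nv - 1 := by omega
            subst hxe
            exact absurd ⟨y, by omega, hxy.symm⟩ hroot
          · omega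
      · intro _
        have he1 : st.nv + 1 - 1 = st.nv := by omega
        rw [he1, hwnil]
        simp
        omega
      · intro x i e he
        obtain ⟨h1, h2, h3⟩ := inv.hpart x i e he
        exact ⟨by omega, h2, h3⟩
      · simp only [meas]
        have he1 : st.nv + 1 - 1 = st.nv := by omega
        rw [he1, hwnil]
        have hmul : (s + n) * (st.nv + 1) = (s + n) * st.nv + (s + n) := by ring
        simp only [List.length_nil]
        omega

lemma inv_nv_le {s n : ℕ} {st : GState} (inv : Inv s n st) :
    st.nv ≤ (WF (s - 2) (n - 2)).card + 1 := by
  rcases Nat.eq_zero_or_pos st.nv with h | h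
  · omega
  · have hmaps : ∀ x ∈ Finset.range (st.nv - 1),
        wordOf x st.edges ∈ WF (s - 2) (n - 2) := by
      intro x hx
      have hx' : x + 1 < st.nv := by
        have := Finset.mem_range.mp hx
        omega
      exact (mem_WF _ _ _).mpr (inv.hstop x hx')
    have hinj : Set.InjOn (fun x => wordOf x st.edges) (Finset.range (st.nv - 1)) := by
      intro x hx y hy hxy
      have hx' : x + 1 < st.nv := by
        have := Finset.mem_range.mp (by simpa using hx)
        omega
      have hy' : y + 1 < st.nv := by
        have := Finset.mem_range.mp (by simpa using hy)
        omega
      exact inv.hdist x y hx' hy' hxy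
    have := Finset.card_le_card_of_injOn _ hmaps hinj
    rw [Finset.card_range] at this
    omega

lemma inv_meas_le {s n : ℕ} {st : GState} (inv : Inv s n st) :
    meas s n st ≤ (s + n) * ((WF (s - 2) (n - 2)).card + 1) + (s + n) := by
  have h1 := inv_nv_le inv
  have h2 : (wordOf (st.nv - 1) st.edges).length ≤ s + n := by
    rcases Nat.eq_zero_or_pos st.nv with h | h
    · have hE : st.edges = [] := by
        cases hE : st.edges with
        | nil => rfl
        | cons e E =>
          have := inv.hsnd e (by rw [hE]; simp)
          omega
      rw [hE]
      simp
    · have := (inv.hnew h).2.2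
      omega
  have h3 : (s + n) * st.nv ≤ (s + n) * ((WF (s - 2) (n - 2)).card + 1) :=
    Nat.mul_le_mul_left _ h1
  simp only [meas]
  omega

lemma wins {s n : ℕ} (hs : 2 ≤ s) (hn : 2 ≤ n) :
    BuilderWins (stratS s n) s n (Nat.choose (s + n - 2) (s - 1))
      ((s - 2) * Nat.choose (s + n - 2) (s - 1) + 1)
      ((s + n - 4) * Nat.choose (s + n - 2) (s - 1) + 1) := by
  intro P
  have hplay : ∀ t, gplay (stratS s n) P (t + 1) = gstep (stratS s n) P (gplay (stratS s n) P t) :=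
    fun t => rfl
  have claim1 : ∀ t, (∀ t' < t, ¬ Won s n (gplay (stratS s n) P t')) →
      Inv s n (gplay (stratS s n) P t) := by
    intro t
    induction t with
    | zero =>
      intro _
      refine ⟨?_, ?_, ?_, ?_, ?_⟩ <;> intros <;> simp_all [gplay]
    | succ t ih =>
      intro h
      have inv := ih (fun t' ht' => h t' (by omega))
      have hstep := main_step hs hn P _ inv (h t (by omega))
      rw [hplay t]
      exact hstep.1
  have hwon : ∃ t, Won s n (gplay (stratS s n) P t) := by
    by_contra hcon
    push_neg at hcon
    have hInv : ∀ t, Inv s n (gplay (stratS s n) P t) :=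
      fun t => claim1 t (fun t' _ => hcon t')
    have hM : ∀ t, t ≤ meas s n (gplay (stratS s n) P t) := by
      intro t
      induction t with
      | zero => exact Nat.zero_le _
      | succ t ih =>
        have hstep := (main_step hs hn P _ (hInv t) (hcon t)).2
        rw [hplay t]
        omega
    have h1 := hM ((s + n) * ((WF (s - 2) (n - 2)).card + 1) + (s + n) + 1)
    have h2 := inv_meas_le (hInv ((s + n) * ((WF (s - 2) (n - 2)).card + 1) + (s + n) + 1))
    omega
  classical
  refine ⟨Nat.find hwon, ?_⟩
  have hWon := Nat.find_spec hwon
  have hInv : Inv s n (gplay (stratS s n) P (Nat.find hwon)) :=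
    claim1 _ (fun t' ht' => Nat.find_min hwon ht')
  set st := gplay (stratS s n) P (Nat.find hwon) with hst
  have hcard := card_WF (s - 2) (n - 2)
  rw [show s - 2 + (n - 2) + 2 = s + n - 2 by omega, show s - 2 + 1 = s - 1 by omega] at hcard
  have hnvle := inv_nv_le hInv
  have hnv1 : 1 ≤ st.nv := by
    by_contra h
    have hE : st.edges = [] := by
      cases hE : st.edges with
      | nil => rfl
      | cons e E =>
        have := hInv.hsnd e (by rw [hE]; simp)
        omega
    rcases hWon with h1 | h1 <;> rw [show st.edges = [] from hE] at h1 <;>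
      simp only [wordOf_nil, List.count_nil] at h1 <;> omega
  refine ⟨?_, ?_, ?_, ?_⟩
  · -- the monochromatic clique
    rcases hWon with h1 | h1
    · left
      have hcl := buildClique hInv true
      rw [h1, show s - 1 + 1 = s by omega] at hcl
      exact hcl
    · right
      have hcl := buildClique hInv false
      rw [h1, show n - 1 + 1 = n by omega] at hcl
      exact hcl
  · omega
  · -- red edges
    obtain ⟨hct, hcf, hcl⟩ := hInv.hnew hnv1
    unfold redCount
    rw [red_eq_sum st.edges st.nv hInv.hsnd]
    have hsplit : ∑ x ∈ Finset.range st.nv, (wordOf x st.edges).count true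
        = (∑ x ∈ Finset.range (st.nv - 1), (wordOf x st.edges).count true)
          + (wordOf (st.nv - 1) st.edges).count true := by
      conv_lhs => rw [show st.nv = (st.nv - 1) + 1 by omega]
      rw [Finset.sum_range_succ]
    have hb1 : ∑ x ∈ Finset.range (st.nv - 1), (wordOf x st.edges).count true
        ≤ (st.nv - 1) * (s - 2) := by
      have := Finset.sum_le_card_nsmul (Finset.range (st.nv - 1))
        (fun x => (wordOf x st.edges).count true) (s - 2)
        (fun x hx => (hInv.hstop x (by have := Finset.mem_range.mp hx; omega)).1)
      simpa [Finset.card_range] using this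
    have hb2 : (st.nv - 1) * (s - 2) ≤ (WF (s - 2) (n - 2)).card * (s - 2) :=
      Nat.mul_le_mul_right _ (by omega)
    have hb3 : (WF (s - 2) (n - 2)).card * (s - 2) = (s - 2) * (WF (s - 2) (n - 2)).card :=
      Nat.mul_comm _ _
    have hb4 : (s - 2) * Nat.choose (s + n - 2) (s - 1)
        = (s - 2) * (WF (s - 2) (n - 2)).card + (s - 2) := by
      rw [← hcard]
      ring
    omega
  · -- total edges
    obtain ⟨hct, hcf, hcl⟩ := hInv.hnew hnv1
    rw [length_eq_sum st.edges st.nv hInv.hsnd]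
    have hlen : ∀ x, (edgesTo x st.edges).length = (wordOf x st.edges).length :=
      fun x => (length_wordOf x st.edges).symm
    simp only [hlen]
    have hsplit : ∑ x ∈ Finset.range st.nv, (wordOf x st.edges).length
        = (∑ x ∈ Finset.range (st.nv - 1), (wordOf x st.edges).length)
          + (wordOf (st.nv - 1) st.edges).length := by
      conv_lhs => rw [show st.nv = (st.nv - 1) + 1 by omega]
      rw [Finset.sum_range_succ]
    have hb1 : ∑ x ∈ Finset.range (st.nv - 1), (wordOf x st.edges).length
        ≤ (st.nv - 1) * (s + n - 4) := by
      have := Finset.sum_le_card_nsmul (Finset.range (st.nv - 1))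
        (fun x => (wordOf x st.edges).length) (s + n - 4)
        (fun x hx => by
          have hx' : x + 1 < st.nv := by
            have := Finset.mem_range.mp hx
            omega
          obtain ⟨u1, u2⟩ := hInv.hstop x hx'
          have := count_true_add_count_false (wordOf x st.edges)
          omega)
      simpa [Finset.card_range] using this
    have hb2 : (st.nv - 1) * (s + n - 4) ≤ (WF (s - 2) (n - 2)).card * (s + n - 4) :=
      Nat.mul_le_mul_right _ (by omega)
    have hb3 : (WF (s - 2) (n - 2)).card * (s + n - 4)
        = (s + n - 4) * (WF (s - 2) (n - 2)).card := Nat.mul_comm _ _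
    have hb4 : (s + n - 4) * Nat.choose (s + n - 2) (s - 1)
        = (s + n - 4) * (WF (s - 2) (n - 2)).card + (s + n - 4) := by
      rw [← hcard]
      ring
    omega

end VOR


/-- In the vertex on-line Ramsey game, builder has a strategy forcing a red `K_s` or a blue
`K_n` using at most `C(s+n-2, s-1)` vertices, `(s-2)·C(s+n-2,s-1)+1` red edges and
`(s+n-4)·C(s+n-2,s-1)+1` edges in total; in particular
`r̃(s,n) ≤ (s+n-4)·C(s+n-2,s-1)+1`. -/
theorem builder_strategy (s n : ℕ) :
    (∃ S : GState → BMove, BuilderWins S s n (Nat.choose (s + n - 2) (s - 1))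
      ((s - 2) * Nat.choose (s + n - 2) (s - 1) + 1)
      ((s + n - 4) * Nat.choose (s + n - 2) (s - 1) + 1)) ∧
    rTilde s n ≤ (s + n - 4) * Nat.choose (s + n - 2) (s - 1) + 1 := by
  have main : ∃ S : GState → BMove, BuilderWins S s n (Nat.choose (s + n - 2) (s - 1))
      ((s - 2) * Nat.choose (s + n - 2) (s - 1) + 1)
      ((s + n - 4) * Nat.choose (s + n - 2) (s - 1) + 1) := by
    by_cases hs : 2 ≤ s
    · by_cases hn : 2 ≤ n
      · exact ⟨VOR.stratS s n, VOR.wins hs hn⟩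
      · refine ⟨fun _ => BMove.reveal, fun P => ⟨0, ?_, ?_, ?_, ?_⟩⟩
        · right
          refine ⟨Finset.range n, Finset.card_range n, fun a ha b hb hab => ?_⟩
          simp only [Finset.mem_range] at ha hb
          exact absurd hab (by omega)
        · exact Nat.zero_le _
        · exact Nat.zero_le _
        · exact Nat.zero_le _
    · refine ⟨fun _ => BMove.reveal, fun P => ⟨0, ?_, ?_, ?_, ?_⟩⟩
      · left
        refine ⟨Finset.range s, Finset.card_range s, fun a ha b hb hab => ?_⟩
        simp only [Finset.mem_range] at ha hb
        exact absurd hab (by omega)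
      · exact Nat.zero_le _
      · exact Nat.zero_le _
      · exact Nat.zero_le _
  refine ⟨main, ?_⟩
  obtain ⟨S, hS⟩ := main
  exact Nat.sInf_le ⟨S, _, _, hS⟩
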